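/- arXiv:1808.02592 — 6 statements merged into one kernel-verified Lean document; each statement's English description precedes it below -/
import Mathlib

section
/- Let (w_i)_{i≥1} be a strictly increasing sequence of positive integers, for 2 ≤ j ≤ i let c_{ij} := ((w_i / w_{i-j+1})² − 1)⁻¹, and define r_{ij} for 1 ≤ j ≤ i by r_{i1} := (−1)^{i−1} and r_{ij} := r_{i,j−1} + c_{ij}(r_{i,j−1} − r_{i−1,j−1}) for 2 ≤ j ≤ i. Then for all 1 ≤ j ≤ i the sign of r_{ij} alternates with i, i.e. (−1)^{i−1} r_{ij} > 0. -/
/-- With a strictly increasing positive support sequence, the round-off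
amplification factors `r i j` of the extrapolation process alternate in sign
with `i`: `(-1)^(i-1) * r i j > 0` for all `1 ≤ j ≤ i`. -/
theorem extrapolation_amplification_sign_alternates
    (w : ℕ → ℕ)
    (hw_pos : ∀ i, 1 ≤ i → 0 < w i)
    (hw_mono : ∀ i j, 1 ≤ i → i < j → w i < w j)
    (c : ℕ → ℕ → ℝ)
    (hc : ∀ i j, 2 ≤ j → j ≤ i →
      c i j = (((w i : ℝ) / (w (i - j + 1) : ℝ)) ^ 2 - 1)⁻¹)
    (r : ℕ → ℕ → ℝ)
    (hr1 : ∀ i, 1 ≤ i → r i 1 = (-1 : ℝ) ^ (i - 1))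
    (hr : ∀ i j, 2 ≤ j → j ≤ i →
      r i j = r i (j - 1) + c i j * (r i (j - 1) - r (i - 1) (j - 1))) :
    ∀ i j, 1 ≤ j → j ≤ i → 0 < (-1 : ℝ) ^ (i - 1) * r i j := by
  intro i j
  induction j generalizing i with
  | zero => omega
  | succ j ih =>
    intro hj hji
    rcases Nat.eq_zero_or_pos j with hj0 | hj1
    · subst hj0
      rw [hr1 i (by omega)]
      exact mul_self_pos.mpr (pow_ne_zero _ (by norm_num))
    · -- j ≥ 1, so j+1 ≥ 2
      have hA : 0 < (-1 : ℝ) ^ (i - 1) * r i j := ih i hj1 (by omega)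
      have hB : 0 < (-1 : ℝ) ^ (i - 1 - 1) * r (i - 1) j := ih (i - 1) hj1 (by omega)
      have hrec := hr i (j + 1) (by omega) hji
      simp only [Nat.add_sub_cancel] at hrec
      -- c positivity
      have hcpos : 0 < c i (j + 1) := by
        rw [hc i (j + 1) (by omega) hji]
        have h1 : 1 ≤ i - (j + 1) + 1 := by omega
        have h2 : i - (j + 1) + 1 < i := by omega
        have hwlt : w (i - (j + 1) + 1) < w i := hw_mono _ _ h1 h2
        have hwp : (0 : ℝ) < (w (i - (j + 1) + 1) : ℝ) := by
          exact_mod_cast hw_pos _ h1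
        have hratio : (1 : ℝ) < (w i : ℝ) / (w (i - (j + 1) + 1) : ℝ) := by
          rw [lt_div_iff₀ hwp]
          simpa using (by exact_mod_cast hwlt : ((w (i - (j + 1) + 1) : ℝ)) < (w i : ℝ))
        have : (1 : ℝ) < ((w i : ℝ) / (w (i - (j + 1) + 1) : ℝ)) ^ 2 := by
          nlinarith
        have : (0 : ℝ) < ((w i : ℝ) / (w (i - (j + 1) + 1) : ℝ)) ^ 2 - 1 := by linarith
        positivity
      -- sign flip between i-1 and i
      have hi2 : 2 ≤ i := by omega
      obtain ⟨k, hk⟩ : ∃ k, i - 1 = k + 1 ∧ i - 1 - 1 = k := ⟨i - 2, by omega, by omega⟩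
      have hsign : (-1 : ℝ) ^ (i - 1) = -(-1 : ℝ) ^ (i - 1 - 1) := by
        rw [hk.2, hk.1, pow_succ]; ring
      have key : (-1 : ℝ) ^ (i - 1) * r (i - 1) j
          = -((-1 : ℝ) ^ (i - 1 - 1) * r (i - 1) j) := by
        rw [hsign]; ring
      have expand : (-1 : ℝ) ^ (i - 1) * r i (j + 1)
          = (-1 : ℝ) ^ (i - 1) * r i j
            + c i (j + 1) * ((-1 : ℝ) ^ (i - 1) * r i j
              - (-1 : ℝ) ^ (i - 1) * r (i - 1) j) := by
        rw [hrec]; ring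
      rw [key] at expand
      rw [expand]
      have hsum : 0 < (-1 : ℝ) ^ (i - 1) * r i j + (-1 : ℝ) ^ (i - 1 - 1) * r (i - 1) j :=
        by linarith
      nlinarith [mul_pos hcpos hsum]
end

section
/- Let (w_i)_{i≥1} be a strictly increasing sequence of positive integers, for 2 ≤ j ≤ i let c_{ij} := ((w_i / w_{i-j+1})² − 1)⁻¹, and define r_{ij} for 1 ≤ j ≤ i by r_{i1} := (−1)^{i−1} and r_{ij} := r_{i,j−1} + c_{ij}(r_{i,j−1} − r_{i−1,j−1}) for 2 ≤ j ≤ i. Then the magnitudes satisfy |r_{ij}| = (1 + c_{ij}) |r_{i,j−1}| + c_{ij} |r_{i−1,j−1}| for all 2 ≤ j ≤ i; in particular the errors from consecutive rows never cancel but always add in magnitude. -/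
/-- With a strictly increasing positive support sequence, the magnitudes of the
round-off amplification factors satisfy
`|r i j| = (1 + c i j) * |r i (j-1)| + c i j * |r (i-1) (j-1)|`:
errors from consecutive rows never cancel but always add in magnitude. -/
theorem extrapolation_amplification_magnitudes_add
    (w : ℕ → ℕ)
    (hw_pos : ∀ i, 1 ≤ i → 0 < w i)
    (hw_mono : ∀ i j, 1 ≤ i → i < j → w i < w j)
    (c : ℕ → ℕ → ℝ)
    (hc : ∀ i j, 2 ≤ j → j ≤ i →
      c i j = (((w i : ℝ) / (w (i - j + 1) : ℝ)) ^ 2 - 1)⁻¹)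
    (r : ℕ → ℕ → ℝ)
    (hr1 : ∀ i, 1 ≤ i → r i 1 = (-1 : ℝ) ^ (i - 1))
    (hr : ∀ i j, 2 ≤ j → j ≤ i →
      r i j = r i (j - 1) + c i j * (r i (j - 1) - r (i - 1) (j - 1))) :
    ∀ i j, 2 ≤ j → j ≤ i →
      |r i j| = (1 + c i j) * |r i (j - 1)| + c i j * |r (i - 1) (j - 1)| := by
  -- the extrapolation coefficients are nonnegative
  have hc_nonneg : ∀ i j, 2 ≤ j → j ≤ i → 0 ≤ c i j := by
    intro i j hj hji
    rw [hc i j hj hji]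
    have h1 : 1 ≤ i - j + 1 := by omega
    have h2 : i - j + 1 < i := by omega
    have hw1 : 0 < w (i - j + 1) := hw_pos _ h1
    have hw2 : w (i - j + 1) < w i := hw_mono _ _ h1 h2
    have hw1' : (0:ℝ) < (w (i - j + 1) : ℝ) := by exact_mod_cast hw1
    have hw2' : ((w (i - j + 1) : ℝ)) < (w i : ℝ) := by exact_mod_cast hw2
    have hlt : (1:ℝ) < (w i : ℝ) / (w (i - j + 1) : ℝ) := by
      rw [lt_div_iff₀ hw1']; linarith
    have hsq : (1:ℝ) < ((w i : ℝ) / (w (i - j + 1) : ℝ)) ^ 2 := by nlinarith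
    exact le_of_lt (inv_pos.mpr (by linarith))
  -- the sign of `r i j` is `(-1)^(i-1)`, independently of `j`
  have hsign : ∀ j, 1 ≤ j → ∀ i, j ≤ i → 0 ≤ (-1:ℝ)^(i-1) * r i j := by
    intro j hj
    induction j, hj using Nat.le_induction with
    | base =>
      intro i hi
      rw [hr1 i hi, ← sq]
      exact sq_nonneg _
    | succ j hj ih =>
      intro i hi
      have hj2 : 2 ≤ j + 1 := by omega
      rw [hr i (j+1) hj2 hi]
      have hsimp : j + 1 - 1 = j := rfl
      rw [hsimp]
      have ha := ih i (by omega)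
      have hb := ih (i-1) (by omega)
      have hcn := hc_nonneg i (j+1) hj2 hi
      obtain ⟨k, rfl⟩ : ∃ k, i = k + 2 := ⟨i - 2, by omega⟩
      have e1 : k + 2 - 1 = k + 1 := rfl
      have e2 : k + 2 - 1 - 1 = k := rfl
      rw [e1] at ha ⊢
      have e2 : k + 2 - 1 - 1 = k := rfl
      rw [e2, e1] at hb
      simp only [pow_succ] at ha ⊢
      nlinarith [mul_nonneg hcn ha, mul_nonneg hcn hb]
  intro i j hj hji
  have hcn := hc_nonneg i j hj hji
  have hs1 : 0 ≤ (-1:ℝ)^(i-1) * r i j := hsign j (by omega) i hji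
  have hs2 : 0 ≤ (-1:ℝ)^(i-1) * r i (j-1) := hsign (j-1) (by omega) i (by omega)
  have hs3 : 0 ≤ (-1:ℝ)^(i-1-1) * r (i-1) (j-1) := hsign (j-1) (by omega) (i-1) (by omega)
  have habs : ∀ (m : ℕ) (x : ℝ), 0 ≤ (-1:ℝ)^m * x → |x| = (-1:ℝ)^m * x := by
    intro m x hx
    have : |x| = |(-1:ℝ)^m * x| := by
      rw [abs_mul, abs_pow, abs_neg, abs_one, one_pow, one_mul]
    rw [this, abs_of_nonneg hx]
  rw [habs _ _ hs1, habs _ _ hs2, habs _ _ hs3]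
  rw [hr i j hj hji]
  obtain ⟨k, rfl⟩ : ∃ k, i = k + 2 := ⟨i - 2, by omega⟩
  have e1 : k + 2 - 1 = k + 1 := rfl
  have e3 : k + 1 - 1 = k := rfl
  rw [e1] at hs2 ⊢
  rw [e3]
  simp only [pow_succ]
  ring
end

section
/- Let (w_i)_{i≥1} be a strictly increasing sequence of positive integers, for 2 ≤ j ≤ i let c_{ij} := ((w_i / w_{i-j+1})² − 1)⁻¹, and define r_{ij} for 1 ≤ j ≤ i by r_{i1} := (−1)^{i−1} and r_{ij} := r_{i,j−1} + c_{ij}(r_{i,j−1} − r_{i−1,j−1}) for 2 ≤ j ≤ i. Then for each fixed i, the magnitude |r_{ij}| is strictly increasing in j: |r_{ij}| > |r_{i,j−1}| for all 2 ≤ j ≤ i. In particular |r_{ij}| ≥ 1 for all 1 ≤ j ≤ i. -/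
/-- With a strictly increasing positive support sequence, for each fixed `i` the
magnitude `|r i j|` of the round-off amplification factor is strictly increasing
in `j`; in particular `|r i j| ≥ 1` for all `1 ≤ j ≤ i`. -/
theorem extrapolation_amplification_strict_mono
    (w : ℕ → ℕ)
    (hw_pos : ∀ i, 1 ≤ i → 0 < w i)
    (hw_mono : ∀ i j, 1 ≤ i → i < j → w i < w j)
    (c : ℕ → ℕ → ℝ)
    (hc : ∀ i j, 2 ≤ j → j ≤ i →
      c i j = (((w i : ℝ) / (w (i - j + 1) : ℝ)) ^ 2 - 1)⁻¹)
    (r : ℕ → ℕ → ℝ)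
    (hr1 : ∀ i, 1 ≤ i → r i 1 = (-1 : ℝ) ^ (i - 1))
    (hr : ∀ i j, 2 ≤ j → j ≤ i →
      r i j = r i (j - 1) + c i j * (r i (j - 1) - r (i - 1) (j - 1))) :
    (∀ i j, 2 ≤ j → j ≤ i → |r i (j - 1)| < |r i j|) ∧
    (∀ i j, 1 ≤ j → j ≤ i → 1 ≤ |r i j|) := by
  have hcpos : ∀ i j, 2 ≤ j → j ≤ i → 0 < c i j := by
    intro i j h2 hji
    rw [hc i j h2 hji]
    have h1 : 1 ≤ i - j + 1 := by omega
    have h2' : i - j + 1 < i := by omega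
    have hwlt : w (i - j + 1) < w i := hw_mono _ _ h1 h2'
    have hwp : (0 : ℝ) < (w (i - j + 1) : ℝ) := by exact_mod_cast hw_pos _ h1
    have hdiv : (1 : ℝ) < (w i : ℝ) / (w (i - j + 1) : ℝ) := by
      rw [lt_div_iff₀ hwp]
      have : (w (i - j + 1) : ℝ) < (w i : ℝ) := by exact_mod_cast hwlt
      linarith
    have hsq : (1 : ℝ) < ((w i : ℝ) / (w (i - j + 1) : ℝ)) ^ 2 := by nlinarith
    exact inv_pos.mpr (by linarith)
  have key : ∀ i, ∀ j, 1 ≤ j → j ≤ i → 1 ≤ (-1 : ℝ) ^ (i - 1) * r i j := by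
    intro i
    induction i using Nat.strong_induction_on with
    | _ i ih =>
      intro j hj1 hji
      induction j with
      | zero => omega
      | succ k ihk =>
        rcases Nat.lt_or_ge k 1 with hk | hk
        · -- j = 1
          have hk0 : k = 0 := by omega
          subst hk0
          rw [hr1 i (by omega), ← pow_add]
          exact le_of_eq (Even.neg_one_pow ⟨i - 1, by ring⟩).symm
        · -- j = k+1 ≥ 2
          have h2 : 2 ≤ k + 1 := by omega
          have hi2 : 2 ≤ i := by omega
          rw [hr i (k + 1) h2 hji]
          simp only [Nat.add_sub_cancel]
          have A : 1 ≤ (-1 : ℝ) ^ (i - 1) * r i k := ihk hk (by omega)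
          have B : 1 ≤ (-1 : ℝ) ^ (i - 1 - 1) * r (i - 1) k :=
            ih (i - 1) (by omega) k hk (by omega)
          have hs : (-1 : ℝ) ^ (i - 1) = -(-1 : ℝ) ^ (i - 1 - 1) := by
            obtain ⟨n, hn⟩ : ∃ n, i - 1 = n + 1 := ⟨i - 2, by omega⟩
            rw [show i - 1 - 1 = n from by omega, hn, pow_succ]; ring
          have B' : (-1 : ℝ) ^ (i - 1) * r (i - 1) k ≤ -1 := by
            rw [hs]; nlinarith
          have hcp := hcpos i (k + 1) h2 hji
          nlinarith
  have habs : ∀ i j, 1 ≤ j → j ≤ i → |r i j| = (-1 : ℝ) ^ (i - 1) * r i j := by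
    intro i j hj hji
    have h := key i j hj hji
    have h2 : |(-1 : ℝ) ^ (i - 1) * r i j| = (-1 : ℝ) ^ (i - 1) * r i j :=
      abs_of_pos (by linarith)
    rwa [abs_mul, abs_pow, abs_neg, abs_one, one_pow, one_mul] at h2
  constructor
  · intro i j h2 hji
    have hi2 : 2 ≤ i := le_trans h2 hji
    rw [habs i (j - 1) (by omega) (by omega), habs i j (by omega) hji,
      hr i j h2 hji]
    have A : 1 ≤ (-1 : ℝ) ^ (i - 1) * r i (j - 1) := key i (j - 1) (by omega) (by omega)
    have B : 1 ≤ (-1 : ℝ) ^ (i - 1 - 1) * r (i - 1) (j - 1) :=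
      key (i - 1) (j - 1) (by omega) (by omega)
    have hs : (-1 : ℝ) ^ (i - 1) = -(-1 : ℝ) ^ (i - 1 - 1) := by
      obtain ⟨n, hn⟩ : ∃ n, i - 1 = n + 1 := ⟨i - 2, by omega⟩
      rw [show i - 1 - 1 = n from by omega, hn, pow_succ]; ring
    have B' : (-1 : ℝ) ^ (i - 1) * r (i - 1) (j - 1) ≤ -1 := by
      rw [hs]; nlinarith
    have hcp := hcpos i j h2 hji
    nlinarith
  · intro i j hj hji
    rw [habs i j hj hji]
    exact key i j hj hji
end

section
/- Let w_i := 2^i be the Romberg sequence, c_{ij} := ((w_i / w_{i-j+1})² − 1)⁻¹, and define r_{ij} for 1 ≤ j ≤ i by r_{i1} := (−1)^{i−1} and r_{ij} := r_{i,j−1} + c_{ij}(r_{i,j−1} − r_{i−1,j−1}) for 2 ≤ j ≤ i. Then |r_{ij}| = ∏_{k=2}^{j} (4^{k−1} + 1)/(4^{k−1} − 1) for all 1 ≤ j ≤ i (the empty product for j = 1 being 1); in particular |r_{ij}| depends only on j and not on i. -/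
/-- For the Romberg sequence `w i = 2^i`, the magnitude of the round-off
amplification factor is `|r i j| = ∏_{k=2}^{j} (4^(k-1) + 1) / (4^(k-1) - 1)`
for all `1 ≤ j ≤ i` (the empty product for `j = 1` being `1`); in particular
it depends only on `j` and not on `i`. -/
theorem romberg_amplification_product_formula
    (w : ℕ → ℕ) (hw : ∀ i, w i = 2 ^ i)
    (c : ℕ → ℕ → ℝ)
    (hc : ∀ i j, 2 ≤ j → j ≤ i →
      c i j = (((w i : ℝ) / (w (i - j + 1) : ℝ)) ^ 2 - 1)⁻¹)
    (r : ℕ → ℕ → ℝ)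
    (hr1 : ∀ i, 1 ≤ i → r i 1 = (-1 : ℝ) ^ (i - 1))
    (hr : ∀ i j, 2 ≤ j → j ≤ i →
      r i j = r i (j - 1) + c i j * (r i (j - 1) - r (i - 1) (j - 1))) :
    ∀ i j, 1 ≤ j → j ≤ i →
      |r i j| = ∏ k ∈ Finset.Icc 2 j,
        ((4 : ℝ) ^ (k - 1) + 1) / ((4 : ℝ) ^ (k - 1) - 1) := by
  have pos : ∀ j, (0:ℝ) < ∏ k ∈ Finset.Icc 2 j,
      ((4 : ℝ) ^ (k - 1) + 1) / ((4 : ℝ) ^ (k - 1) - 1) := by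
    intro j
    apply Finset.prod_pos
    intro k hk
    have hk2 : 2 ≤ k := (Finset.mem_Icc.mp hk).1
    have h4 : (4:ℝ) ≤ 4 ^ (k - 1) := by
      calc (4:ℝ) = 4 ^ 1 := by norm_num
      _ ≤ 4 ^ (k - 1) := by
        apply pow_le_pow_right₀ (by norm_num); omega
    apply div_pos <;> linarith
  have key : ∀ j, 1 ≤ j → ∀ i, j ≤ i →
      r i j = (-1:ℝ)^(i-1) * ∏ k ∈ Finset.Icc 2 j,
        ((4 : ℝ) ^ (k - 1) + 1) / ((4 : ℝ) ^ (k - 1) - 1) := by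
    intro j
    induction j with
    | zero => intro h; omega
    | succ j ih =>
      intro _ i hi
      rcases Nat.eq_zero_or_pos j with hj0 | hj1
      · subst hj0
        simp [hr1 i (by omega)]
      · have hji : j ≤ i - 1 := by omega
        have h2 : 2 ≤ j + 1 := by omega
        have hrec := hr i (j+1) h2 hi
        have hsimp : j + 1 - 1 = j := rfl
        rw [hsimp] at hrec
        have e1 := ih hj1 i (by omega)
        have e2 := ih hj1 (i-1) hji
        have h4j : (4:ℝ) ≤ 4 ^ j := by
          calc (4:ℝ) = 4 ^ 1 := by norm_num
          _ ≤ 4 ^ j := by apply pow_le_pow_right₀ (by norm_num); omega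
        have hcv : c i (j+1) = ((4:ℝ)^j - 1)⁻¹ := by
          rw [hc i (j+1) h2 hi, hw, hw]
          have hidx : i - (j+1) + 1 = i - j := by omega
          rw [hidx]
          have h2r : ((2:ℝ))^i / (2:ℝ)^(i-j) = 2^j := by
            rw [div_eq_iff (by positivity), ← pow_add]
            congr 1; omega
          push_cast
          rw [h2r]
          have : ((2:ℝ)^j)^2 = 4^j := by
            rw [← pow_mul, mul_comm, pow_mul]; norm_num
          rw [this]
        have hs : (-1:ℝ)^(i-1) = -(-1:ℝ)^(i-1-1) := by
          have h := pow_succ (-1:ℝ) (i-1-1)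
          rw [show (i-1-1)+1 = i-1 from by omega] at h
          rw [h]; ring
        have hP : (∏ k ∈ Finset.Icc 2 (j+1),
              ((4 : ℝ) ^ (k - 1) + 1) / ((4 : ℝ) ^ (k - 1) - 1))
            = (∏ k ∈ Finset.Icc 2 j,
              ((4 : ℝ) ^ (k - 1) + 1) / ((4 : ℝ) ^ (k - 1) - 1))
              * (((4:ℝ)^j + 1) / ((4:ℝ)^j - 1)) := by
          rw [Finset.prod_Icc_succ_top h2]
          norm_num
        rw [hrec, e1, e2, hcv, hs, hP]
        have hne : (4:ℝ)^j - 1 ≠ 0 := by linarith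
        generalize (∏ k ∈ Finset.Icc 2 j,
          ((4 : ℝ) ^ (k - 1) + 1) / ((4 : ℝ) ^ (k - 1) - 1)) = P
        field_simp
        ring
  intro i j hj hij
  rw [key j hj i hij, abs_mul, abs_pow, abs_neg, abs_one, one_pow, one_mul,
    abs_of_pos (pos j)]
end

section
/- Let w_i := 2^i be the Romberg sequence, c_{ij} := ((w_i / w_{i-j+1})² − 1)⁻¹, and define r_{ij} for 1 ≤ j ≤ i by r_{i1} := (−1)^{i−1} and r_{ij} := r_{i,j−1} + c_{ij}(r_{i,j−1} − r_{i−1,j−1}) for 2 ≤ j ≤ i. Then |r_{ij}| < 2 for all 1 ≤ j ≤ i; i.e. with the Romberg sequence the propagation effect of the initial alternating round-off errors through the extrapolation process is less than a factor of two. -/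
noncomputable def rombA : ℕ → ℝ
  | 0 => 1
  | 1 => 1
  | (n+2) => rombA (n+1) * (((4:ℝ)^(n+1) + 1)/((4:ℝ)^(n+1) - 1))

lemma rombA_succ (k : ℕ) (hk : 1 ≤ k) :
    rombA (k+1) = rombA k * (((4:ℝ)^k + 1)/((4:ℝ)^k - 1)) := by
  match k, hk with
  | (m+1), _ => rfl

lemma four_pow_ge (k : ℕ) (hk : 1 ≤ k) : (4:ℝ) ≤ 4^k := by
  calc (4:ℝ) = 4^1 := (pow_one 4).symm
  _ ≤ 4^k := pow_le_pow_right₀ (by norm_num) hk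

lemma rombA_pos : ∀ n, 0 < rombA n := by
  intro n
  induction n with
  | zero => norm_num [rombA]
  | succ k ih =>
    rcases Nat.eq_zero_or_pos k with rfl | hk
    · norm_num [rombA]
    · rw [rombA_succ k hk]
      have h4 := four_pow_ge k hk
      have hp : (0:ℝ) < 4^k := by positivity
      apply mul_pos ih
      apply div_pos <;> linarith

lemma rombA_bound : ∀ n, 3 ≤ n → rombA n ≤ 2 - 6/4^n := by
  intro n hn
  induction n, hn using Nat.le_induction with
  | base => norm_num [rombA]
  | succ n hn ih =>
    rw [rombA_succ n (by omega)]
    set x : ℝ := 4^n with hx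
    have hx64 : (64:ℝ) ≤ x := by
      calc (64:ℝ) = 4^3 := by norm_num
      _ ≤ 4^n := pow_le_pow_right₀ (by norm_num) hn
    have hx1 : (0:ℝ) < x - 1 := by linarith
    have hfac : (0:ℝ) ≤ (x + 1)/(x - 1) := by positivity
    have h1 : rombA n * ((x + 1)/(x - 1)) ≤ (2 - 6/x) * ((x + 1)/(x - 1)) :=
      mul_le_mul_of_nonneg_right ih hfac
    have h2 : (2 - 6/x) * ((x + 1)/(x - 1)) ≤ 2 - 6/4^(n+1) := by
      have hxp : (0:ℝ) < x := by linarith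
      have h4 : (4:ℝ)^(n+1) = 4 * x := by rw [pow_succ]; ring
      rw [h4]
      have e1 : (2 - 6/x) * (x+1) ≤ (2 - 6/(4*x)) * (x-1) := by
        have e2 : (6:ℝ)/x * x = 6 := by field_simp
        have e3 : (6:ℝ)/(4*x) * x = 3/2 := by field_simp; ring
        nlinarith [div_pos (by norm_num : (0:ℝ)<6) hxp,
          div_pos (by norm_num : (0:ℝ)<6) (by linarith : (0:ℝ) < 4*x)]
      calc (2 - 6/x) * ((x+1)/(x-1)) = (2 - 6/x) * (x+1) / (x-1) := by ring
      _ ≤ (2 - 6/(4*x)) * (x-1) / (x-1) := by gcongr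
      _ = 2 - 6/(4*x) := by field_simp
    linarith

lemma rombA_lt_two : ∀ n, rombA n < 2 := by
  intro n
  match n, Nat.lt_or_ge n 3 with
  | 0, _ => norm_num [rombA]
  | 1, _ => norm_num [rombA]
  | 2, _ => norm_num [rombA]
  | (n+3), _ =>
    have h := rombA_bound (n+3) (by omega)
    have : (0:ℝ) < 6/4^(n+3) := by positivity
    linarith

/-- For the Romberg sequence `w i = 2^i`, the round-off propagation effect of
the extrapolation process is less than a factor of two: `|r i j| < 2` for all
`1 ≤ j ≤ i`. -/
theorem romberg_amplification_lt_two
    (w : ℕ → ℕ) (hw : ∀ i, w i = 2 ^ i)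
    (c : ℕ → ℕ → ℝ)
    (hc : ∀ i j, 2 ≤ j → j ≤ i →
      c i j = (((w i : ℝ) / (w (i - j + 1) : ℝ)) ^ 2 - 1)⁻¹)
    (r : ℕ → ℕ → ℝ)
    (hr1 : ∀ i, 1 ≤ i → r i 1 = (-1 : ℝ) ^ (i - 1))
    (hr : ∀ i j, 2 ≤ j → j ≤ i →
      r i j = r i (j - 1) + c i j * (r i (j - 1) - r (i - 1) (j - 1))) :
    ∀ i j, 1 ≤ j → j ≤ i → |r i j| < 2 := by
  -- simplify c
  have hc' : ∀ i j, 2 ≤ j → j ≤ i → c i j = ((4:ℝ)^(j-1) - 1)⁻¹ := by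
    intro i j hj hij
    rw [hc i j hj hij, hw, hw]
    have hq : (2:ℝ)^i / (2:ℝ)^(i-j+1) = (2:ℝ)^(j-1) := by
      rw [div_eq_iff (by positivity), ← pow_add]
      congr 1
      omega
    push_cast
    rw [hq, ← pow_mul]
    congr 2
    rw [show (4:ℝ) = 2^2 by norm_num, ← pow_mul]
    ring_nf
  -- the closed form
  have key : ∀ j i, 1 ≤ j → j ≤ i → r i j = (-1:ℝ)^(i-1) * rombA j := by
    intro j
    induction j with
    | zero => intro i h; omega
    | succ k ih =>
      intro i h1 h2
      rcases Nat.eq_zero_or_pos k with rfl | hk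
      · rw [hr1 i h2]
        norm_num [rombA]
      · have hi2 : 2 ≤ i := by omega
        rw [hr i (k+1) (by omega) h2]
        simp only [Nat.add_sub_cancel]
        rw [ih i hk (by omega), ih (i-1) hk (by omega),
          hc' i (k+1) (by omega) h2, rombA_succ k hk]
        simp only [Nat.add_sub_cancel]
        have hsign : ((-1:ℝ))^(i-1-1) = -(-1:ℝ)^(i-1) := by
          have h'' : i - 1 - 1 = i - 2 := by omega
          have h' : i - 1 = (i - 2) + 1 := by omega
          rw [h'', h', pow_succ]
          ring
        rw [hsign]
        have h4 := four_pow_ge k hk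
        have hne : (4:ℝ)^k - 1 ≠ 0 := by
          have : (0:ℝ) < 4^k := by positivity
          intro h; nlinarith
        field_simp
        ring
  intro i j hj hij
  rw [key j i hj hij, abs_mul, abs_pow, abs_neg, abs_one, one_pow, one_mul,
    abs_of_pos (rombA_pos j)]
  exact rombA_lt_two j
end

section
/- The infinite product ∏_{k=1}^{∞} (4^k + 1)/(4^k − 1) converges (i.e. the partial products ∏_{k=1}^{n} (4^k + 1)/(4^k − 1) form a convergent, strictly increasing sequence) and its value is strictly less than 2. -/
open Finset Filter

private noncomputable def rombergP (n : ℕ) : ℝ :=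
  ∏ k ∈ Finset.Icc 1 n, ((4 : ℝ) ^ k + 1) / ((4 : ℝ) ^ k - 1)

private lemma romberg_one_lt_pow {k : ℕ} (hk : 1 ≤ k) : (1 : ℝ) < 4 ^ k := by
  calc (1:ℝ) < 4 ^ 1 := by norm_num
  _ ≤ 4 ^ k := by
    apply pow_le_pow_right₀ (by norm_num) hk

private lemma romberg_factor_pos {k : ℕ} (hk : 1 ≤ k) :
    0 < ((4 : ℝ) ^ k + 1) / ((4 : ℝ) ^ k - 1) := by
  have h := romberg_one_lt_pow (k := k) hk
  apply div_pos <;> linarith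

private lemma rombergP_succ (n : ℕ) :
    rombergP (n + 1) = rombergP n *
      (((4 : ℝ) ^ (n+1) + 1) / ((4 : ℝ) ^ (n+1) - 1)) := by
  unfold rombergP
  exact Finset.prod_Icc_succ_top (Nat.succ_le_succ (Nat.zero_le n)) _

private lemma rombergP_pos (n : ℕ) : 0 < rombergP n := by
  unfold rombergP
  apply Finset.prod_pos
  intro k hk
  exact romberg_factor_pos (Finset.mem_Icc.mp hk).1

private lemma rombergP_key : ∀ n, 2 ≤ n →
    rombergP n ≤ 119/60 - (119/90) / 4 ^ n := by
  intro n hn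
  induction n, hn using Nat.le_induction with
  | base =>
      have : rombergP 2 = (17:ℝ)/9 := by
        unfold rombergP
        rw [show Finset.Icc 1 2 = {1, 2} from rfl]
        norm_num
      rw [this]; norm_num
  | succ n hn ih =>
      rw [rombergP_succ]
      set y : ℝ := (4:ℝ)^n with hy
      have hy1 : (1:ℝ) ≤ y := (romberg_one_lt_pow (le_trans one_le_two hn)).le
      have hx : (4:ℝ)^(n+1) = y * 4 := by rw [pow_succ]
      have hfpos : 0 < ((4 : ℝ) ^ (n+1) + 1) / ((4 : ℝ) ^ (n+1) - 1) :=
        romberg_factor_pos (Nat.succ_le_succ (Nat.zero_le n))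
      calc rombergP n * (((4 : ℝ) ^ (n+1) + 1) / ((4 : ℝ) ^ (n+1) - 1))
          ≤ (119/60 - (119/90) / 4 ^ n) *
            (((4 : ℝ) ^ (n+1) + 1) / ((4 : ℝ) ^ (n+1) - 1)) :=
            mul_le_mul_of_nonneg_right ih hfpos.le
        _ ≤ 119/60 - (119/90) / 4 ^ (n+1) := by
            rw [hx, ← hy]
            rw [show (119:ℝ)/60 - 119/90/y = (119*(3*y-2))/(180*y) by field_simp; ring,
                show (119:ℝ)/60 - 119/90/(y*4) = (119*(6*y-1))/(360*y) by field_simp; ring,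
                div_mul_div_comm]
            have h2 : (0:ℝ) < y := by linarith
            have h1 : (0:ℝ) < y * 4 - 1 := by nlinarith
            rw [div_le_div_iff₀ (by positivity) (by positivity)]
            nlinarith [sq_nonneg y, mul_pos h2 h2]

private lemma rombergP_le (n : ℕ) : rombergP n ≤ 119/60 := by
  match n with
  | 0 => unfold rombergP; norm_num
  | 1 =>
      have : rombergP 1 = (5:ℝ)/3 := by
        unfold rombergP; norm_num
      rw [this]; norm_num
  | (n+2) =>
      have h := rombergP_key (n+2) (by omega)
      have : (0:ℝ) ≤ (119/90) / 4 ^ (n+2) := by positivity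
      linarith

/-- The infinite product `∏_{k=1}^{∞} (4^k + 1)/(4^k - 1)` converges (its
partial products form a strictly increasing convergent sequence) and its value
is strictly less than `2`. -/
theorem romberg_infinite_product_lt_two :
    StrictMono (fun n : ℕ =>
      ∏ k ∈ Finset.Icc 1 n, ((4 : ℝ) ^ k + 1) / ((4 : ℝ) ^ k - 1)) ∧
    ∃ l : ℝ,
      Filter.Tendsto (fun n : ℕ =>
          ∏ k ∈ Finset.Icc 1 n, ((4 : ℝ) ^ k + 1) / ((4 : ℝ) ^ k - 1))
        Filter.atTop (nhds l) ∧ l < 2 := by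
  have hP : (fun n : ℕ =>
      ∏ k ∈ Finset.Icc 1 n, ((4 : ℝ) ^ k + 1) / ((4 : ℝ) ^ k - 1)) = rombergP := rfl
  rw [hP]
  have hsm : StrictMono rombergP := by
    apply strictMono_nat_of_lt_succ
    intro n
    rw [rombergP_succ]
    have h := romberg_one_lt_pow (k := n+1) (Nat.succ_le_succ (Nat.zero_le n))
    have hf : 1 < ((4 : ℝ) ^ (n+1) + 1) / ((4 : ℝ) ^ (n+1) - 1) := by
      rw [lt_div_iff₀ (by linarith)]; linarith
    exact lt_mul_of_one_lt_right (rombergP_pos n) hf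
  refine ⟨hsm, ⨆ n, rombergP n, ?_, ?_⟩
  · exact tendsto_atTop_ciSup hsm.monotone
      ⟨119/60, by rintro x ⟨n, rfl⟩; exact rombergP_le n⟩
  · have : (⨆ n, rombergP n) ≤ 119/60 := ciSup_le rombergP_le
    linarith
end
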